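/- Let {U_i}_{i ∈ I} be a finite set of d×d unitary matrices with tr(U_i† U_j) = 0 for all i ≠ j, let r_i ∈ ℝ, and let T(X) = ∑_{i ∈ I} r_i U_i X U_i†. Then the trace norm of the Choi matrix of T satisfies ‖J_T‖₁ = d ∑_{i ∈ I} |r_i|. -/

import Mathlib

open scoped Kronecker ComplexOrder
open Matrix

noncomputable section

/-- `id_k ⊗ N` applied blockwise. -/
def idTensor {n m : Type*} (k : Type*)
    (N : Matrix n n ℂ → Matrix m m ℂ)
    (M : Matrix (k × n) (k × n) ℂ) : Matrix (k × m) (k × m) ℂ :=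
  Matrix.of fun p q => N (Matrix.of fun a b => M (p.1, a) (q.1, b)) p.2 q.2

/-- Trace-preserving. -/
def IsTP {n m : Type*} [Fintype n] [Fintype m]
    (N : Matrix n n ℂ → Matrix m m ℂ) : Prop :=
  ∀ X, (N X).trace = X.trace

/-- Hermitian-preserving. -/
def IsHP {n m : Type*} (N : Matrix n n ℂ → Matrix m m ℂ) : Prop :=
  ∀ X, X.IsHermitian → (N X).IsHermitian

/-- Completely positive: for every `k`, `id_k ⊗ N` preserves positive semidefiniteness. -/
def IsCP {n m : Type*} [Fintype n] [Fintype m]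
    (N : Matrix n n ℂ → Matrix m m ℂ) : Prop :=
  ∀ (k : ℕ) (M : Matrix (Fin k × n) (Fin k × n) ℂ),
    M.PosSemidef → (idTensor (Fin k) N M).PosSemidef

/-- Completely positive and trace-preserving (quantum channel). -/
def IsCPTP {n m : Type*} [Fintype n] [Fintype m]
    (N : Matrix n n ℂ → Matrix m m ℂ) : Prop :=
  IsLinearMap ℂ N ∧ IsCP N ∧ IsTP N

/-- Completely positive and trace non-increasing. -/
def IsCPTN {n m : Type*} [Fintype n] [Fintype m]
    (N : Matrix n n ℂ → Matrix m m ℂ) : Prop :=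
  IsLinearMap ℂ N ∧ IsCP N ∧ ∀ X : Matrix n n ℂ, X.PosSemidef → (N X).trace ≤ X.trace

/-- Costs of finite quasiprobability decompositions of `N` into CPTP maps. -/
def decompCosts {n m : Type*} [Fintype n] [Fintype m]
    (N : Matrix n n ℂ → Matrix m m ℂ) : Set ℝ :=
  { c | ∃ (s : ℕ) (η : Fin s → ℝ) (O : Fin s → (Matrix n n ℂ → Matrix m m ℂ)),
      (∀ i, IsCPTP (O i)) ∧ (∀ X, N X = ∑ i, (η i : ℂ) • O i X) ∧ c = ∑ i, |η i| }

/-- The physical implementability `ν(N)`. -/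
noncomputable def nu {n m : Type*} [Fintype n] [Fintype m]
    (N : Matrix n n ℂ → Matrix m m ℂ) : ℝ :=
  Real.logb 2 (sInf (decompCosts N))

/-- The Choi matrix of a linear map. -/
def choiMatrix {n m : Type*} [DecidableEq n]
    (N : Matrix n n ℂ → Matrix m m ℂ) : Matrix (n × m) (n × m) ℂ :=
  Matrix.of fun p q => N (Matrix.single p.1 q.1 1) p.2 q.2

/-- Partial trace over the second tensor factor. -/
def ptraceB {n m : Type*} [Fintype m] (J : Matrix (n × m) (n × m) ℂ) :
    Matrix n n ℂ :=
  Matrix.of fun i j => ∑ a, J (i, a) (j, a)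

/-- The square root of a positive semidefinite matrix (the definition of
`Matrix.PosSemidef.sqrt` in the older Mathlib, which no longer has it). -/
noncomputable def Matrix.PosSemidef.sqrt {n 𝕜 : Type*} [Fintype n] [DecidableEq n] [RCLike 𝕜]
    {A : Matrix n n 𝕜} (hA : A.PosSemidef) : Matrix n n 𝕜 :=
  hA.1.eigenvectorUnitary.1 * diagonal ((↑) ∘ (√·) ∘ hA.1.eigenvalues) *
    (star hA.1.eigenvectorUnitary : Matrix n n 𝕜)

/-- The trace norm of a matrix. -/
noncomputable def traceNorm {k : Type*} [Fintype k] [DecidableEq k]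
    (X : Matrix k k ℂ) : ℝ :=
  ((Matrix.posSemidef_conjTranspose_mul_self X).sqrt.trace).re

/-- Tensor product of two maps. -/
def tensorMap {n₁ n₂ m₂ : Type*} [Fintype n₁] [DecidableEq n₁]
    (M : Matrix n₁ n₁ ℂ → Matrix n₁ n₁ ℂ) (N : Matrix n₂ n₂ ℂ → Matrix m₂ m₂ ℂ)
    (X : Matrix (n₁ × n₂) (n₁ × n₂) ℂ) : Matrix (n₁ × m₂) (n₁ × m₂) ℂ :=
  ∑ i : n₁, ∑ j : n₁,
    (M (Matrix.single i j 1)) ⊗ₖ (N (Matrix.of fun a b => X (i, a) (j, b)))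


/-- for `T(X) = ∑ᵢ rᵢ Uᵢ X Uᵢ†` with mutually trace-orthogonal unitaries
`Uᵢ` and real coefficients `rᵢ`, the Choi matrix satisfies `‖J_T‖₁ = d ∑ᵢ |rᵢ|`. -/
theorem traceNorm_choi_mixed_unitary {d s : ℕ}
    (U : Fin s → Matrix (Fin d) (Fin d) ℂ)
    (hU : ∀ i, U i ∈ Matrix.unitaryGroup (Fin d) ℂ)
    (horth : ∀ i j, i ≠ j → ((U i)ᴴ * U j).trace = 0)
    (r : Fin s → ℝ) :
    traceNorm (choiMatrix (fun X => ∑ i, (r i : ℂ) • (U i * X * (U i)ᴴ))) =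
      d * ∑ i, |r i| := by
  classical
  set w : Fin s → (Fin d × Fin d) → ℂ := fun i p => U i p.2 p.1 with hw
  set P : Fin s → Matrix (Fin d × Fin d) (Fin d × Fin d) ℂ :=
    fun i => Matrix.of fun p q => w i p * star (w i q) with hPdef
  -- the key inner products
  have hKey : ∀ i j, (∑ t : Fin d × Fin d, star (w i t) * w j t) = ((U i)ᴴ * U j).trace := by
    intro i j
    rw [Matrix.trace, Fintype.sum_prod_type]
    simp [Matrix.mul_apply, Matrix.diag, Matrix.conjTranspose_apply, hw]
  have hKd : ∀ i, (∑ t : Fin d × Fin d, star (w i t) * w i t) = (d : ℂ) := by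
    intro i
    rw [hKey i i, ← Matrix.star_eq_conjTranspose, Matrix.mem_unitaryGroup_iff'.mp (hU i)]
    simp
  have hKne : ∀ i j, i ≠ j → (∑ t : Fin d × Fin d, star (w i t) * w j t) = 0 :=
    fun i j h => (hKey i j).trans (horth i j h)
  -- the Choi matrix is a combination of the rank-one projections P i
  have hJ : choiMatrix (fun X => ∑ i, (r i : ℂ) • (U i * X * (U i)ᴴ)) = ∑ i, (r i : ℂ) • P i := by
    ext p q
    simp only [choiMatrix, Matrix.of_apply, Matrix.sum_apply, Matrix.smul_apply, hPdef]
    refine Finset.sum_congr rfl fun i _ => ?_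
    simp [Matrix.mul_apply, Matrix.single, Matrix.conjTranspose_apply,
      Finset.mul_sum, mul_ite, ite_mul, hw, mul_comm, ite_and, Finset.sum_ite_eq,
      Finset.sum_ite_eq']
  set J := choiMatrix (fun X => ∑ i, (r i : ℂ) • (U i * X * (U i)ᴴ)) with hJdef
  -- products of the P i
  have hPP : ∀ i j, P i * P j = if i = j then (d : ℂ) • P i else 0 := by
    intro i j
    have hmain : ∀ p q : Fin d × Fin d,
        (P i * P j) p q = (∑ t, star (w i t) * w j t) * (w i p * star (w j q)) := by
      intro p q
      rw [Matrix.mul_apply, Finset.sum_mul]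
      exact Finset.sum_congr rfl fun t _ => by simp [hPdef]; ring
    by_cases h : i = j
    · subst h
      ext p q
      rw [hmain, hKd]
      simp [hPdef]
    · ext p q
      rw [hmain, hKne i j h]
      simp [h]
  -- product of two combinations
  have hcomb : ∀ c e : Fin s → ℝ,
      (∑ i, (c i : ℂ) • P i) * (∑ j, (e j : ℂ) • P j)
        = ∑ i, ((c i * e i * d : ℝ) : ℂ) • P i := by
    intro c e
    rw [Finset.sum_mul]
    refine Finset.sum_congr rfl fun i _ => ?_
    rw [Finset.mul_sum]
    rw [Finset.sum_eq_single i]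
    · rw [smul_mul_smul_comm, hPP i i]
      simp only [if_true, eq_self_iff_true, smul_smul]
      norm_cast
    · intro j _ hji
      rw [smul_mul_smul_comm, hPP i j, if_neg (Ne.symm hji), smul_zero]
    · intro h; exact absurd (Finset.mem_univ i) h
  -- S : the candidate square root
  set S : Matrix (Fin d × Fin d) (Fin d × Fin d) ℂ := ∑ i, ((|r i| : ℝ) : ℂ) • P i with hSdef
  -- S is PSD: S = Bᴴ * B
  set B : Matrix (Fin s) (Fin d × Fin d) ℂ :=
    Matrix.of fun i q => (Real.sqrt |r i| : ℂ) * star (w i q) with hBdef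
  have hSB : S = Bᴴ * B := by
    ext p q
    simp only [hSdef, Matrix.sum_apply, Matrix.smul_apply, Matrix.mul_apply,
      Matrix.conjTranspose_apply, hBdef, Matrix.of_apply, hPdef]
    refine Finset.sum_congr rfl fun i _ => ?_
    have h1 : star ((Real.sqrt |r i| : ℂ)) = (Real.sqrt |r i| : ℂ) := by
      simp [Complex.star_def, Complex.conj_ofReal]
    have h2 : (Real.sqrt |r i| : ℂ) * (Real.sqrt |r i| : ℂ) = ((|r i| : ℝ) : ℂ) := by
      rw [← Complex.ofReal_mul, Real.mul_self_sqrt (abs_nonneg _)]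
    rw [star_mul', h1, star_star, smul_eq_mul, ← h2]
    ring
  have hSpsd : S.PosSemidef := hSB ▸ Matrix.posSemidef_conjTranspose_mul_self B
  -- J is Hermitian
  have hJherm : Jᴴ = J := by
    rw [hJ]
    ext p q
    simp only [Matrix.conjTranspose_apply, Matrix.sum_apply, Matrix.smul_apply, hPdef,
      Matrix.of_apply, star_sum]
    refine Finset.sum_congr rfl fun i _ => ?_
    simp [star_mul', mul_comm, Complex.star_def, Complex.conj_ofReal, smul_eq_mul]
  -- S ^ 2 = Jᴴ * J
  have hsq : S ^ 2 = Jᴴ * J := by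
    rw [pow_two, hJherm, hJ, hSdef, hcomb, hcomb]
    refine Finset.sum_congr rfl fun i _ => ?_
    rw [abs_mul_abs_self]
  -- identify the square root
  have hsqrt : S = (Matrix.posSemidef_conjTranspose_mul_self J).sqrt :=
    by
      have hA := Matrix.posSemidef_conjTranspose_mul_self J
      open scoped MatrixOrder in
      have h1 : hA.sqrt = CFC.sqrt (Jᴴ * J) := by
        rw [CFC.sqrt_eq_cfc, cfc_nnreal_eq_real _ (Jᴴ * J), hA.1.cfc_eq]
        simp only [Matrix.PosSemidef.sqrt, IsHermitian.cfc, Unitary.conjStarAlgAut_apply]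
        congr 3
        funext i
        simp [hA.eigenvalues_nonneg i]
      open scoped MatrixOrder in
      exact h1 ▸ (CFC.sqrt_unique (by rw [← sq]; exact hsq) hSpsd.nonneg).symm
  -- compute the trace
  have htr : S.trace = ((d * ∑ i, |r i| : ℝ) : ℂ) := by
    rw [hSdef, Matrix.trace_sum]
    have : ∀ i, ((((|r i| : ℝ)) : ℂ) • P i).trace = ((d * |r i| : ℝ) : ℂ) := by
      intro i
      rw [Matrix.trace_smul]
      have : (P i).trace = (d : ℂ) := by
        rw [Matrix.trace]
        rw [show ∑ t, (P i).diag t = ∑ t, star (w i t) * w i t from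
          Finset.sum_congr rfl fun t _ => by simp [hPdef, Matrix.diag]; ring]
        exact hKd i
      rw [this, smul_eq_mul]
      push_cast
      ring
    rw [Finset.sum_congr rfl fun i _ => this i]
    push_cast
    rw [Finset.mul_sum]
  unfold traceNorm
  rw [← hsqrt, htr]
  exact Complex.ofReal_re _

end
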